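/- A Jacobi algebra (A, d, ·, i, j) is a commutative BV∞-algebra with Δ₁ = [i,d], Δ₂ = −ji, and Δₙ = 0 for n ≥ 3; that is, [d,Δ₁] = 0, [d,Δ₂] + Δ₁² = 0, Δ₁Δ₂ + Δ₂Δ₁ = 0, and Δ₂² = 0. -/

import Mathlib

/-- Graded commutativity with Koszul signs. -/
def GradedComm {A : Type*} [Ring A] [Algebra ℚ A] (𝒜 : ℤ → Submodule ℚ A) : Prop :=
  ∀ (m n : ℤ) (x y : A), x ∈ 𝒜 m → y ∈ 𝒜 n → x * y = ((-1 : ℚ) ^ (m * n)) • (y * x)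

/-- `D` is homogeneous of degree `k` with respect to the grading `𝒜`. -/
def Homog {A : Type*} [Ring A] [Algebra ℚ A] (𝒜 : ℤ → Submodule ℚ A) (k : ℤ)
    (D : Module.End ℚ A) : Prop :=
  ∀ (m : ℤ) (x : A), x ∈ 𝒜 m → D x ∈ 𝒜 (m + k)

/-- Differential operator of order `≤ 1` (the shuffle-sum definition for `n = 1`). -/
def IsDO1 {A : Type*} [Ring A] [Algebra ℚ A] (𝒜 : ℤ → Submodule ℚ A)
    (D : Module.End ℚ A) : Prop :=
  ∀ (m n : ℤ) (x y : A), x ∈ 𝒜 m → y ∈ 𝒜 n →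
    D (x * y) = D x * y + ((-1 : ℚ) ^ (m * n)) • (D y * x)

/-- Differential operator of order `≤ 2` (the shuffle-sum definition for `n = 2`). -/
def IsDO2 {A : Type*} [Ring A] [Algebra ℚ A] (𝒜 : ℤ → Submodule ℚ A)
    (D : Module.End ℚ A) : Prop :=
  ∀ (a b c : ℤ) (x y z : A), x ∈ 𝒜 a → y ∈ 𝒜 b → z ∈ 𝒜 c →
    D (x * y) * z + ((-1 : ℚ) ^ (b * c)) • (D (x * z) * y)
      + ((-1 : ℚ) ^ (a * (b + c))) • (D (y * z) * x)
    = D x * (y * z) + ((-1 : ℚ) ^ (a * b)) • (D y * (x * z))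
      + ((-1 : ℚ) ^ (c * (a + b))) • (D z * (x * y)) + D (x * y * z)


/-- A Jacobi algebra `(A, d, ·, i, j)` — a DG commutative algebra with a
degree `−2` order `≤ 2` differential operator `i` and a degree `−1` order `≤ 1` differential
operator `j` satisfying `[i,[i,d]] = −2ji`, `[i,j] = 0`, `[j,[i,d]] = 0`, `j² = 0` — is a
commutative BV∞-algebra with `Δ₁ = [i,d]`, `Δ₂ = −ji` and `Δₙ = 0` for `n ≥ 3`; that is,
`[d,Δ₁] = 0`, `[d,Δ₂] + Δ₁² = 0`, `Δ₁Δ₂ + Δ₂Δ₁ = 0` and `Δ₂² = 0`.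
(Graded commutators: `i` is even, so `[i,x] = ix − xi`; `j`, `d`, `Δ₁` and `Δ₂` are odd, so
their mutual brackets are anticommutators.) -/
theorem jacobi_is_commutative_bv_infinity {A : Type*} [Ring A] [Algebra ℚ A]
    (𝒜 : ℤ → Submodule ℚ A) (hcomm : GradedComm 𝒜)
    (d : Module.End ℚ A) (hd_deg : Homog 𝒜 1 d) (hd_leib : IsDO1 𝒜 d) (hdd : d * d = 0)
    (i : Module.End ℚ A) (hi_deg : Homog 𝒜 (-2) i) (hi_ord : IsDO2 𝒜 i)
    (j : Module.End ℚ A) (hj_deg : Homog 𝒜 (-1) j) (hj_ord : IsDO1 𝒜 j)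
    (r1 : i * (i * d - d * i) - (i * d - d * i) * i = -(2 • (j * i)))
    (r2 : i * j - j * i = 0)
    (r3 : j * (i * d - d * i) + (i * d - d * i) * j = 0)
    (r4 : j * j = 0) :
    d * (i * d - d * i) + (i * d - d * i) * d = 0 ∧
    d * (-(j * i)) + (-(j * i)) * d + (i * d - d * i) * (i * d - d * i) = 0 ∧
    (i * d - d * i) * (-(j * i)) + (-(j * i)) * (i * d - d * i) = 0 ∧
    (-(j * i)) * (-(j * i)) = 0 := by
  have hij : i * j = j * i := sub_eq_zero.mp r2
  have hJI : j * i + j * i = (i * d - d * i) * i - i * (i * d - d * i) := by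
    have h := r1
    rw [two_smul] at h
    have h2 := congrArg Neg.neg h
    rw [neg_sub, neg_neg] at h2
    exact h2.symm
  refine ⟨?_, ?_, ?_, ?_⟩
  · have h : d * (i * d - d * i) + (i * d - d * i) * d
        = i * (d * d) - (d * d) * i := by exact (fun {R : Type _} [Ring R] (i d : R) => (by noncomm_ring : d * (i * d - d * i) + (i * d - d * i) * d = i * (d * d) - (d * d) * i)) i d
    rw [h, hdd]; simp
  · set X := d * (-(j * i)) + (-(j * i)) * d + (i * d - d * i) * (i * d - d * i) with hX
    have h2 : X + X
        = -(d * (j * i + j * i)) - (j * i + j * i) * d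
          + ((i * d - d * i) * (i * d - d * i) + (i * d - d * i) * (i * d - d * i)) := by
      rw [hX]; exact (fun {R : Type _} [Ring R] (i d j : R) => (by noncomm_ring : d * (-(j * i)) + (-(j * i)) * d + (i * d - d * i) * (i * d - d * i) + (d * (-(j * i)) + (-(j * i)) * d + (i * d - d * i) * (i * d - d * i)) = -(d * (j * i + j * i)) - (j * i + j * i) * d + ((i * d - d * i) * (i * d - d * i) + (i * d - d * i) * (i * d - d * i)))) i d j
    rw [hJI] at h2
    have h3 : -(d * ((i * d - d * i) * i - i * (i * d - d * i)))
          - ((i * d - d * i) * i - i * (i * d - d * i)) * d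
          + ((i * d - d * i) * (i * d - d * i) + (i * d - d * i) * (i * d - d * i))
        = i * i * (d * d) + (d * d) * (i * i) - i * (d * d) * i - i * (d * d) * i := by
      exact (fun {R : Type _} [Ring R] (i d : R) => (by noncomm_ring : -(d * ((i * d - d * i) * i - i * (i * d - d * i))) - ((i * d - d * i) * i - i * (i * d - d * i)) * d + ((i * d - d * i) * (i * d - d * i) + (i * d - d * i) * (i * d - d * i)) = i * i * (d * d) + (d * d) * (i * i) - i * (d * d) * i - i * (d * d) * i)) i d
    rw [hdd] at h3
    simp only [mul_zero, zero_mul, sub_zero, add_zero, zero_add, sub_self] at h3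
    have hzero : X + X = 0 := h2.trans h3
    have h2q : (2 : ℚ) • X = 0 := by
      rw [two_smul]; exact hzero
    rcases smul_eq_zero.mp h2q with h | h
    · norm_num at h
    · exact h
  · have hjd : (i * d - d * i) * j = -(j * (i * d - d * i)) :=
      eq_neg_of_add_eq_zero_right r3
    have hDi : (i * d - d * i) * i = i * (i * d - d * i) + (j * i + j * i) := by
      rw [hJI]; noncomm_ring
    have key : (i * d - d * i) * (j * i) + (j * i) * (i * d - d * i) = 0 := by
      calc (i * d - d * i) * (j * i) + (j * i) * (i * d - d * i)
          = ((i * d - d * i) * j) * i + (j * i) * (i * d - d * i) := by noncomm_ring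
        _ = (-(j * (i * d - d * i))) * i + (j * i) * (i * d - d * i) := by rw [hjd]
        _ = -(j * ((i * d - d * i) * i)) + j * (i * (i * d - d * i)) := by exact (fun {R : Type _} [Ring R] (i d j : R) => (by noncomm_ring : (-(j * (i * d - d * i))) * i + (j * i) * (i * d - d * i) = -(j * ((i * d - d * i) * i)) + j * (i * (i * d - d * i)))) i d j
        _ = -(j * (i * (i * d - d * i) + (j * i + j * i)))
            + j * (i * (i * d - d * i)) := by rw [hDi]
        _ = -((j * j) * i + (j * j) * i) := by noncomm_ring
        _ = 0 := by rw [r4]; simp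
    have : (i * d - d * i) * (-(j * i)) + (-(j * i)) * (i * d - d * i)
        = -((i * d - d * i) * (j * i) + (j * i) * (i * d - d * i)) := by exact (fun {R : Type _} [Ring R] (i d j : R) => (by noncomm_ring : (i * d - d * i) * (-(j * i)) + (-(j * i)) * (i * d - d * i) = -((i * d - d * i) * (j * i) + (j * i) * (i * d - d * i)))) i d j
    rw [this, key, neg_zero]
  · calc (-(j * i)) * (-(j * i)) = j * (i * j) * i := by exact (fun {R : Type _} [Ring R] (i j : R) => (by noncomm_ring : (-(j * i)) * (-(j * i)) = j * (i * j) * i)) i j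
      _ = j * (j * i) * i := by rw [hij]
      _ = (j * j) * (i * i) := by noncomm_ring
      _ = 0 := by rw [r4]; simp
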